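/- Let B be a separable metrizable topological group that is not σ-compact and whose underlying topological space is homeomorphic to an F_σ-subset (a countable union of closed sets) of a complete metric space. Then no subspace X of B having the Hurewicz property Ufin(O,Γ) generates B. -/

import Mathlib

open Set Filter Topology

universe u

/-- `c` is an open cover of the space `X`. -/
def IsOpenCover {X : Type u} [TopologicalSpace X] (c : Set (Set X)) : Prop :=
  (∀ U ∈ c, IsOpen U) ∧ ⋃₀ c = Set.univ

/-- The Hurewicz property `Ufin(O,Γ)`. -/
def HurewiczProp (X : Type u) [TopologicalSpace X] : Prop :=
  ∀ c : ℕ → Set (Set X), (∀ n, IsOpenCover (c n)) →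
    ∃ v : ℕ → Set (Set X), (∀ n, v n ⊆ c n ∧ (v n).Finite) ∧
      ∀ x : X, ∀ᶠ n in atTop, x ∈ ⋃₀ v n

open scoped Pointwise

/-- The image of a Hurewicz space under a continuous map to a complete metric space
is contained in a countable union of compact sets. -/
lemma hurewicz_range_subset_sigma_compact {W : Type*} {Y : Type*} [TopologicalSpace W]
    [MetricSpace Y] [CompleteSpace Y] (hW : HurewiczProp W) (g : W → Y)
    (hg : Continuous g) :
    ∃ K : ℕ → Set Y, (∀ n, IsCompact (K n)) ∧ Set.range g ⊆ ⋃ n, K n := by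
  obtain hY | hY := isEmpty_or_nonempty Y
  · exact ⟨fun _ => ∅, fun _ => isCompact_empty,
      by rw [Set.eq_empty_of_isEmpty (Set.range g)]; exact Set.empty_subset _⟩
  set r : ℕ → ℝ := fun n => (1 / 2 : ℝ) ^ n with hr
  have hrpos : ∀ n, 0 < r n := fun n => by positivity
  set c : ℕ → Set (Set W) := fun n =>
    { s | ∃ p : Y, s = g ⁻¹' Metric.ball p (r n) } with hc
  have hcover : ∀ n, IsOpenCover (c n) := by
    intro n
    constructor
    · rintro U ⟨p, rfl⟩
      exact Metric.isOpen_ball.preimage hg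
    · apply Set.eq_univ_of_forall
      intro w
      exact ⟨g ⁻¹' Metric.ball (g w) (r n), ⟨g w, rfl⟩,
        by simp [Metric.mem_ball, hrpos n]⟩
  obtain ⟨v, hv, hvcov⟩ := hW c hcover
  have hch : ∀ n, ∀ s ∈ v n, ∃ p : Y, s = g ⁻¹' Metric.ball p (r n) := by
    intro n s hs
    exact (hv n).1 hs
  choose! P hP using hch
  set F : ℕ → Set Y := fun n => P n '' (v n) with hF
  have hFfin : ∀ n, (F n).Finite := fun n => (hv n).2.image _
  set K : ℕ → Set Y := fun m =>
    { y : Y | ∀ n, m ≤ n → ∃ p ∈ F n, dist y p ≤ r n } with hK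
  have hKeq : ∀ m, K m = ⋂ (n) (_ : m ≤ n), ⋃ p ∈ F n, Metric.closedBall p (r n) := by
    intro m
    ext y
    simp [hK, Metric.mem_closedBall]
  have hKclosed : ∀ m, IsClosed (K m) := by
    intro m
    rw [hKeq m]
    refine isClosed_iInter fun n => isClosed_iInter fun _ => ?_
    exact (hFfin n).isClosed_biUnion fun p _ => Metric.isClosed_closedBall
  have hKtb : ∀ m, TotallyBounded (K m) := by
    intro m
    rw [Metric.totallyBounded_iff]
    intro ε hε
    obtain ⟨n0, hn0⟩ : ∃ n0 : ℕ, (1 / 2 : ℝ) ^ n0 < ε := by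
      refine exists_pow_lt_of_lt_one hε (by norm_num)
    set n := max m n0 with hn
    refine ⟨F n, hFfin n, ?_⟩
    intro y hy
    obtain ⟨p, hp, hdist⟩ := hy n (le_max_left _ _)
    refine Set.mem_biUnion hp ?_
    have : r n ≤ r n0 := by
      apply pow_le_pow_of_le_one (by norm_num) (by norm_num) (le_max_right _ _)
    exact Metric.mem_ball.2 (lt_of_le_of_lt hdist (lt_of_le_of_lt this hn0))
  have hKcompact : ∀ m, IsCompact (K m) :=
    fun m => TotallyBounded.isCompact_of_isClosed (hKtb m) (hKclosed m)
  refine ⟨K, hKcompact, ?_⟩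
  rintro _ ⟨w, rfl⟩
  obtain ⟨m, hm⟩ := (eventually_atTop).1 (hvcov w)
  refine Set.mem_iUnion.2 ⟨m, ?_⟩
  intro n hn
  obtain ⟨s, hs, hws⟩ := hm n hn
  refine ⟨P n s, Set.mem_image_of_mem _ hs, ?_⟩
  have := hP n s hs
  rw [this] at hws
  exact le_of_lt (by simpa [Metric.mem_ball, dist_comm] using hws)

/-- Product of a list of sets in a monoid. -/
def setListProd {B : Type u} [Monoid B] : List (Set B) → Set B
  | [] => {1}
  | s :: l => s * setListProd l

lemma setListProd_isCompact {B : Type u} [Monoid B] [TopologicalSpace B]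
    [ContinuousMul B] : ∀ l : List (Set B), (∀ s ∈ l, IsCompact s) →
    IsCompact (setListProd l) := by
  intro l
  induction l with
  | nil => intro _; exact isCompact_singleton
  | cons s l ih =>
    intro h
    exact (h s List.mem_cons_self).mul (ih fun t ht => h t (List.mem_cons_of_mem _ ht))

lemma mem_setListProd_of_forall {B : Type u} [Monoid B] (A : ℕ → Set B) :
    ∀ l : List B, (∀ y ∈ l, ∃ n, y ∈ A n) →
      ∃ w : List ℕ, l.prod ∈ setListProd (w.map A) := by
  intro l
  induction l with
  | nil => intro _; exact ⟨[], by simp [setListProd]⟩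
  | cons y l ih =>
    intro h
    obtain ⟨n, hn⟩ := h y List.mem_cons_self
    obtain ⟨w, hw⟩ := ih fun z hz => h z (List.mem_cons_of_mem _ hz)
    exact ⟨n :: w, by simpa [setListProd] using Set.mul_mem_mul hn hw⟩

/-- A separable metrizable non-σ-compact topological group homeomorphic to an
`Fσ`-subset of a complete metric space is not generated by any of its Hurewicz
subspaces. -/
theorem stmt_9 (B : Type u) [TopologicalSpace B] [Group B] [IsTopologicalGroup B]
    [TopologicalSpace.SeparableSpace B] [TopologicalSpace.MetrizableSpace B]
    (hnotsc : ¬ ∃ K : ℕ → Set B, (∀ n, IsCompact (K n)) ∧ ⋃ n, K n = Set.univ)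
    (Y : Type u) [MetricSpace Y] [CompleteSpace Y]
    (T : ℕ → Set Y) (hT : ∀ n, IsClosed (T n)) (e : B ≃ₜ ↥(⋃ n, T n)) :
    ∀ X : Set B, HurewiczProp ↥X → Subgroup.closure X ≠ ⊤ := by
  intro X hX htop
  apply hnotsc
  -- the map from X into Y
  set g : ↥X → Y := fun x => ((e x.val : ↥(⋃ n, T n)) : Y) with hg
  have hgc : Continuous g :=
    continuous_subtype_val.comp (e.continuous.comp continuous_subtype_val)
  obtain ⟨K, hKc, hKcov⟩ := hurewicz_range_subset_sigma_compact hX g hgc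
  -- compact sets in B covering X
  set C : ℕ × ℕ → Set B := fun p =>
    e.symm '' ((Subtype.val : ↥(⋃ n, T n) → Y) ⁻¹' (K p.1 ∩ T p.2)) with hC
  have hCc : ∀ p, IsCompact (C p) := by
    rintro ⟨m, j⟩
    have h1 : IsCompact (K m ∩ T j) := (hKc m).inter_right (hT j)
    have hsub : K m ∩ T j ⊆ ⋃ n, T n := fun y hy =>
      Set.mem_iUnion.2 ⟨j, hy.2⟩
    have h2 : IsCompact ((Subtype.val : ↥(⋃ n, T n) → Y) ⁻¹' (K m ∩ T j)) := by
      rw [Topology.IsEmbedding.subtypeVal.isCompact_iff]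
      rwa [Subtype.image_preimage_coe, Set.inter_eq_right.2 hsub]
    exact h2.image e.symm.continuous
  have hXC : ∀ x ∈ X, ∃ p : ℕ × ℕ, x ∈ C p := by
    intro x hx
    have h1 : g ⟨x, hx⟩ ∈ ⋃ n, K n := hKcov ⟨⟨x, hx⟩, rfl⟩
    obtain ⟨m, hm⟩ := Set.mem_iUnion.1 h1
    obtain ⟨j, hj⟩ := Set.mem_iUnion.1 (e x).2
    refine ⟨(m, j), ?_⟩
    refine ⟨e x, ⟨hm, hj⟩, by simp⟩
  -- symmetric compact sets indexed by ℕ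
  set A : ℕ → Set B := fun n =>
    C (Denumerable.ofNat (ℕ × ℕ) n) ∪ (C (Denumerable.ofNat (ℕ × ℕ) n))⁻¹ with hA
  have hAc : ∀ n, IsCompact (A n) := fun n => (hCc _).union (hCc _).inv
  have hmemA : ∀ y : B, y ∈ X ∪ X⁻¹ → ∃ n, y ∈ A n := by
    rintro y (hy | hy)
    · obtain ⟨p, hp⟩ := hXC y hy
      exact ⟨Encodable.encode p, by
        rw [hA]; simp only [Denumerable.ofNat_encode]; exact Or.inl hp⟩
    · obtain ⟨p, hp⟩ := hXC y⁻¹ (Set.mem_inv.1 hy)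
      exact ⟨Encodable.encode p, by
        rw [hA]; simp only [Denumerable.ofNat_encode]
        exact Or.inr (Set.mem_inv.2 hp)⟩
  -- the σ-compact cover of B
  refine ⟨fun n => setListProd ((Denumerable.ofNat (List ℕ) n).map A), ?_, ?_⟩
  · intro n
    apply setListProd_isCompact
    intro s hs
    obtain ⟨i, _, rfl⟩ := List.mem_map.1 hs
    exact hAc i
  · apply Set.eq_univ_of_forall
    intro b
    have hb : b ∈ Subgroup.closure X := htop ▸ Subgroup.mem_top b
    have hb' : b ∈ Submonoid.closure (X ∪ X⁻¹) := by
      rw [← Subgroup.closure_toSubmonoid] at *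
      exact hb
    obtain ⟨l, hl, hprod⟩ := Submonoid.exists_list_of_mem_closure hb'
    obtain ⟨w, hw⟩ := mem_setListProd_of_forall A l fun y hy => hmemA y (hl y hy)
    rw [hprod] at hw
    exact Set.mem_iUnion.2 ⟨Encodable.encode w, by
      simp only [Denumerable.ofNat_encode]; exact hw⟩
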